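/- Let ρ̄ : ℝ≥0 → ℝ≥0 be non-decreasing with ρ̄(0)=0 and lim_{s→0⁺} ρ̄(s) = 0. Then there exists a class-K∞ function ζ with ρ̄(s) ≤ ζ(s) for all s ≥ 0. -/

import Mathlib

def ClassK (a : ℝ → ℝ) : Prop :=
  ContinuousOn a (Set.Ici 0) ∧ StrictMonoOn a (Set.Ici 0) ∧ a 0 = 0

def ClassKInf (a : ℝ → ℝ) : Prop :=
  ClassK a ∧ Filter.Tendsto a Filter.atTop Filter.atTop

def ClassKL (σ : ℝ → ℝ → ℝ) : Prop :=
  ContinuousOn (fun p : ℝ × ℝ => σ p.1 p.2) (Set.Ici 0 ×ˢ Set.Ici 0) ∧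
  (∀ t ≥ (0:ℝ), StrictMonoOn (fun s => σ s t) (Set.Ici 0) ∧ σ 0 t = 0) ∧
  (∀ s ≥ (0:ℝ), AntitoneOn (fun t => σ s t) (Set.Ici 0) ∧
    Filter.Tendsto (fun t => σ s t) Filter.atTop (nhds 0))

open MeasureTheory intervalIntegral Set Filter

theorem stmt4 (ρbar : ℝ → ℝ) (hmono : MonotoneOn ρbar (Set.Ici 0))
    (h0 : ρbar 0 = 0)
    (hlim : Filter.Tendsto ρbar (nhdsWithin 0 (Set.Ioi 0)) (nhds 0)) :
    ∃ ζ : ℝ → ℝ, ClassKInf ζ ∧ ∀ s ≥ (0:ℝ), ρbar s ≤ ζ s := by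
  set ρ' : ℝ → ℝ := fun u => ρbar (max u 0) with hρ'def
  have hρ'mono : Monotone ρ' := fun u v huv =>
    hmono (Set.mem_Ici.mpr (le_max_right u 0)) (Set.mem_Ici.mpr (le_max_right v 0))
      (max_le_max huv le_rfl)
  have hρ'0 : ρ' 0 = 0 := by simp [hρ'def, h0]
  have hρ'eq : ∀ s : ℝ, 0 ≤ s → ρ' s = ρbar s := by
    intro s hs; simp [hρ'def, max_eq_left hs]
  -- integrability
  have hFint : ∀ a b : ℝ, IntervalIntegrable ρ' volume a b := fun a b =>
    (hρ'mono.monotoneOn _).intervalIntegrable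
  have hint : ∀ s : ℝ, 0 ≤ s → IntervalIntegrable (fun t => ρ' (s * (1 + t))) volume 0 1 := by
    intro s hs
    have hm : Monotone fun t => ρ' (s * (1 + t)) := fun a b hab =>
      hρ'mono (by nlinarith)
    exact (hm.monotoneOn _).intervalIntegrable
  set g : ℝ → ℝ := fun s => ∫ t in (0:ℝ)..1, ρ' (s * (1 + t)) with hgdef
  have hg0 : g 0 = 0 := by simp [hgdef, hρ'0]
  have hgmono : MonotoneOn g (Set.Ici 0) := by
    intro a ha b hb hab
    apply intervalIntegral.integral_mono_on (by norm_num) (hint a ha) (hint b hb)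
    intro t ht
    exact hρ'mono (mul_le_mul_of_nonneg_right hab (by linarith [ht.1]))
  have hgnonneg : ∀ s : ℝ, 0 ≤ s → 0 ≤ g s := fun s hs =>
    hg0 ▸ hgmono (Set.self_mem_Ici) hs hs
  have hlb : ∀ s : ℝ, 0 ≤ s → ρbar s ≤ g s := by
    intro s hs
    have h1 : ρbar s = ∫ _ in (0:ℝ)..1, ρ' s := by
      rw [intervalIntegral.integral_const]; simp [hρ'eq s hs]
    rw [h1]
    apply intervalIntegral.integral_mono_on (by norm_num)
      intervalIntegrable_const (hint s hs)
    intro t ht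
    exact hρ'mono (by nlinarith [ht.1])
  have hub : ∀ s : ℝ, 0 ≤ s → g s ≤ ρbar (2 * s) := by
    intro s hs
    have h1 : ρbar (2 * s) = ∫ _ in (0:ℝ)..1, ρ' (2 * s) := by
      rw [intervalIntegral.integral_const]; simp [hρ'eq (2 * s) (by linarith)]
    rw [h1]
    apply intervalIntegral.integral_mono_on (by norm_num) (hint s hs)
      intervalIntegrable_const
    intro t ht
    exact hρ'mono (by nlinarith [ht.2])
  -- continuity
  have hFcont : Continuous fun x => ∫ u in (0:ℝ)..x, ρ' u :=
    intervalIntegral.continuous_primitive hFint 0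
  have hgeq : ∀ s ∈ Set.Ioi (0:ℝ), g s =
      s⁻¹ * ((∫ u in (0:ℝ)..(2 * s), ρ' u) - ∫ u in (0:ℝ)..s, ρ' u) := by
    intro s hs
    have h1 : g s = ∫ t in (0:ℝ)..1, ρ' (s * t + s) := by
      simp only [hgdef]
      congr 1
      ext t
      ring_nf
    rw [h1, intervalIntegral.integral_comp_mul_add ρ' (ne_of_gt hs) s]
    rw [intervalIntegral.integral_interval_sub_left (hFint 0 (2 * s)) (hFint 0 s)]
    rw [smul_eq_mul]
    norm_num [two_mul]
  have hρ2s : Filter.Tendsto (fun s => ρbar (2 * s)) (nhdsWithin 0 (Set.Ioi 0)) (nhds 0) := by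
    apply hlim.comp
    apply tendsto_nhdsWithin_of_tendsto_nhds_of_eventually_within
    · have : Filter.Tendsto (fun s : ℝ => 2 * s) (nhds 0) (nhds 0) := by
        simpa using (continuous_mul_left (2:ℝ)).tendsto (0:ℝ)
      exact this.mono_left nhdsWithin_le_nhds
    · exact eventually_mem_nhdsWithin.mono fun x hx => by
        simp only [Set.mem_Ioi] at hx ⊢; linarith
  have hgcont : ContinuousOn g (Set.Ici 0) := by
    intro s hs
    rcases eq_or_lt_of_le (Set.mem_Ici.mp hs) with h | h
    · -- s = 0
      subst h
      rw [ContinuousWithinAt, hg0]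
      have hIci : Set.Ici (0:ℝ) = insert 0 (Set.Ioi 0) := by
        ext x
        simp [le_iff_lt_or_eq, or_comm, eq_comm]
      rw [hIci, nhdsWithin_insert, Filter.tendsto_sup]
      constructor
      · simpa [hg0] using tendsto_pure_nhds g 0
      · apply tendsto_of_tendsto_of_tendsto_of_le_of_le' tendsto_const_nhds hρ2s
        · exact eventually_mem_nhdsWithin.mono fun x hx =>
            hgnonneg x (le_of_lt hx)
        · exact eventually_mem_nhdsWithin.mono fun x hx =>
            hub x (le_of_lt hx)
    · -- s > 0
      have hcont : ContinuousOn g (Set.Ioi 0) := by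
        apply ContinuousOn.congr (f := fun s =>
          s⁻¹ * ((∫ u in (0:ℝ)..(2 * s), ρ' u) - ∫ u in (0:ℝ)..s, ρ' u)) _ hgeq
        apply ContinuousOn.mul
        · exact continuousOn_id.inv₀ fun x hx => ne_of_gt hx
        · exact ((hFcont.comp (continuous_const.mul continuous_id)).continuousOn).sub
            hFcont.continuousOn
      exact ((hcont s h).continuousAt (Ioi_mem_nhds h)).continuousWithinAt
  refine ⟨fun s => s + g s, ⟨⟨?_, ?_, ?_⟩, ?_⟩, ?_⟩
  · exact continuous_id.continuousOn.add hgcont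
  · intro a ha b hb hab
    exact add_lt_add_of_lt_of_le hab (hgmono ha hb hab.le)
  · simp [hg0]
  · apply Filter.tendsto_atTop_mono' Filter.atTop _ Filter.tendsto_id
    exact (Filter.eventually_ge_atTop 0).mono fun s hs =>
      le_add_of_nonneg_right (hgnonneg s hs)
  · intro s hs
    calc ρbar s ≤ g s := hlb s hs
    _ ≤ s + g s := le_add_of_nonneg_left hs
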